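/- arXiv:2502.09995 — 2 statements merged into one kernel-verified Lean document; each statement's English description precedes it below -/
import Mathlib

section
/- Let T ⊆ ℕ* be a finitely branching rooted tree in which every node has at least two successors, and let S ⊆ T be a subtree without leaves that is level-wise uniformly branching. Let r > 0, let n ∈ ℕ, and let F ⊆ S be a finite prefix-free set of strings, each of length at least n, such that every path of S extends some element of F. Then there exists k ≥ n such that Σ_{ρ ∈ F} |T_{|ρ|}|^{-r} ≥ |S_k| · |T_k|^{-r}. -/
open Filter MeasureTheory

namespace FractalTree

/-- The `n`-th level of a tree `T ⊆ ℕ*`: the strings in `T` of length `n`. -/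
def level (T : Set (List ℕ)) (n : ℕ) : Set (List ℕ) := {σ | σ ∈ T ∧ σ.length = n}

/-- A tree is a nonempty set of finite sequences closed under initial segments. -/
def IsTree (T : Set (List ℕ)) : Prop :=
  T.Nonempty ∧ ∀ σ ∈ T, ∀ τ : List ℕ, τ <+: σ → τ ∈ T

/-- The immediate successors of a node `σ` in `T`. -/
def succs (T : Set (List ℕ)) (σ : List ℕ) : Set ℕ := {a | σ ++ [a] ∈ T}

/-- Every node of `T` has finitely many immediate successors. -/
def FinBranching (T : Set (List ℕ)) : Prop := ∀ σ ∈ T, (succs T σ).Finite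

/-- Every node of `T` has at least two immediate successors. -/
def AtLeastTwo (T : Set (List ℕ)) : Prop :=
  ∀ σ ∈ T, ∃ a b : ℕ, a ≠ b ∧ a ∈ succs T σ ∧ b ∈ succs T σ

/-- Every node of `S` has at least one immediate successor (no leaves). -/
def NoLeaves (S : Set (List ℕ)) : Prop := ∀ σ ∈ S, ∃ a : ℕ, a ∈ succs S σ

/-- `S` is level-wise uniformly branching: the number of immediate successors of a node
only depends on its level. -/
def UnifBranching (S : Set (List ℕ)) : Prop :=
  ∀ n : ℕ, ∀ σ ∈ level S n, ∀ τ ∈ level S n, (succs S σ).ncard = (succs S τ).ncard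

/-- The initial segment of length `n` of an infinite sequence `f`. -/
def seg (f : ℕ → ℕ) (n : ℕ) : List ℕ := (List.range n).map f

/-- The set `[T]` of infinite paths through `T`. -/
def paths (T : Set (List ℕ)) : Set (ℕ → ℕ) := {f | ∀ n : ℕ, seg f n ∈ T}

open Classical in
/-- The ultrametric on `[T]`: `d(f,g) = 1/|T_n|` where `n` is the least index with
`f n ≠ g n`, and `d(f,f) = 0`. -/
noncomputable def treeDist (T : Set (List ℕ)) (f g : ℕ → ℕ) : ℝ :=
  if h : ∃ n, f n ≠ g n then 1 / ((level T (Nat.find h)).ncard : ℝ) else 0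

lemma nil_mem {T : Set (List ℕ)} (hT : IsTree T) : [] ∈ T := by
  obtain ⟨⟨σ, hσ⟩, hcl⟩ := hT
  exact hcl σ hσ [] List.nil_prefix

lemma level_finite {T : Set (List ℕ)} (hT : IsTree T) (hTfin : FinBranching T) :
    ∀ k, (level T k).Finite := by
  intro k
  induction k with
  | zero =>
    apply Set.Finite.subset (Set.finite_singleton ([] : List ℕ))
    rintro σ ⟨-, hlen⟩
    simpa using List.length_eq_zero_iff.mp hlen
  | succ k ih =>
    apply Set.Finite.subset
      (Set.Finite.biUnion ih (fun σ hσ => ((hTfin σ hσ.1).image (fun a => σ ++ [a]))))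
    rintro τ ⟨hτ, hlen⟩
    have hne : τ ≠ [] := by rintro rfl; simp at hlen
    have h1 : τ.take k ∈ level T k := by
      refine ⟨hT.2 τ hτ _ (List.take_prefix k τ), by simp [hlen]⟩
    have heq : τ.take k ++ [τ.getLast hne] = τ := by
      have h := List.dropLast_append_getLast hne
      have h2 : τ.dropLast = τ.take k := by
        rw [List.dropLast_eq_take, hlen]; norm_num
      rw [h2] at h; exact h
    exact Set.mem_biUnion h1 ⟨τ.getLast hne, show τ.take k ++ [τ.getLast hne] ∈ T by rw [heq]; exact hτ, heq⟩



lemma exists_path_extending {S : Set (List ℕ)} (hS : IsTree S) (hSnl : NoLeaves S)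
    {σ : List ℕ} (hσ : σ ∈ S) : ∃ f ∈ paths S, seg f σ.length = σ := by
  let ext : ℕ → {l : List ℕ // l ∈ S} := fun i => Nat.rec ⟨σ, hσ⟩
    (fun _ p => ⟨p.1 ++ [Classical.choose (hSnl p.1 p.2)],
      Classical.choose_spec (hSnl p.1 p.2)⟩) i
  have hstep : ∀ i, (ext (i+1)).1 = (ext i).1 ++ [Classical.choose (hSnl (ext i).1 (ext i).2)] :=
    fun i => rfl
  have hlen : ∀ i, (ext i).1.length = σ.length + i := by
    intro i; induction i with
    | zero => rfl
    | succ i ih => rw [hstep, List.length_append, ih]; simp; ring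
  set f : ℕ → ℕ := fun j => (ext (j+1)).1.getD j 0 with hf
  have hseg : ∀ m, seg f m = (ext m).1.take m := by
    intro m; induction m with
    | zero => simp [seg]
    | succ m ih =>
      have h1 : seg f (m+1) = seg f m ++ [f m] := by
        simp [seg, List.range_succ]
      have hmlt : m < (ext (m+1)).1.length := by have := hlen (m+1); omega
      have h2 : (ext (m+1)).1.take (m+1) = (ext (m+1)).1.take m ++ [f m] := by
        rw [List.take_succ]
        congr 1
        rw [List.getElem?_eq_getElem hmlt]
        simp [hf, List.getD, List.getElem?_eq_getElem hmlt]
      have h3 : (ext (m+1)).1.take m = (ext m).1.take m := by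
        rw [hstep, List.take_append_of_le_length (by have := hlen m; omega)]
      rw [h1, h2, h3, ih]
  refine ⟨f, ?_, ?_⟩
  · intro m
    rw [hseg]
    exact hS.2 _ (ext m).2 _ (List.take_prefix _ _)
  · rw [hseg]
    have : σ <+: (ext σ.length).1 := by
      have hpre : ∀ i, σ <+: (ext i).1 := by
        intro i; induction i with
        | zero => exact List.prefix_refl _
        | succ i ih => rw [hstep]; exact ih.trans ⟨_, rfl⟩
      exact hpre _
    obtain ⟨t, ht⟩ := this
    rw [← ht, List.take_append_of_le_length le_rfl, List.take_length]

section Count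

variable {S : Set (List ℕ)} {LS : ℕ → Finset (List ℕ)}

lemma level_nonempty (hS : IsTree S) (hSnl : NoLeaves S)
    (hLS : ∀ k σ, σ ∈ LS k ↔ σ ∈ S ∧ σ.length = k) (m : ℕ) : ∃ σ, σ ∈ LS m := by
  induction m with
  | zero => exact ⟨[], (hLS 0 []).mpr ⟨nil_mem hS, rfl⟩⟩
  | succ m ih =>
    obtain ⟨σ, hσ⟩ := ih
    obtain ⟨hσS, hσl⟩ := (hLS m σ).mp hσ
    obtain ⟨a, ha⟩ := hSnl σ hσS
    exact ⟨σ ++ [a], (hLS _ _).mpr ⟨ha, by simp [hσl]⟩⟩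

lemma take_mem (hS : IsTree S) (hLS : ∀ k σ, σ ∈ LS k ↔ σ ∈ S ∧ σ.length = k)
    {K m : ℕ} (hm : m ≤ K) {τ : List ℕ} (hτ : τ ∈ LS K) : τ.take m ∈ LS m := by
  obtain ⟨hτS, hτl⟩ := (hLS K τ).mp hτ
  exact (hLS m _).mpr ⟨hS.2 τ hτS _ (List.take_prefix m τ), by simp [hτl]; omega⟩

lemma pf_disjoint {K : ℕ} {G : Finset (List ℕ)}
    (hpf : ∀ ρ ∈ G, ∀ ρ' ∈ G, ρ <+: ρ' → ρ = ρ') :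
    ∀ ρ ∈ G, ∀ ρ' ∈ G, ρ ≠ ρ' →
      Disjoint ((LS K).filter (ρ <+: ·)) ((LS K).filter (ρ' <+: ·)) := by
  intro ρ hρ ρ' hρ' hne
  refine Finset.disjoint_left.mpr ?_
  intro x hx hx'
  have h1 := (Finset.mem_filter.mp hx).2
  have h2 := (Finset.mem_filter.mp hx').2
  rcases List.prefix_or_prefix_of_prefix h1 h2 with h | h
  · exact hne (hpf ρ hρ ρ' hρ' h)
  · exact hne (hpf ρ' hρ' ρ hρ h).symm

lemma cover_le_sum (hS : IsTree S) (hLS : ∀ k σ, σ ∈ LS k ↔ σ ∈ S ∧ σ.length = k)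
    {K : ℕ} {G : Finset (List ℕ)}
    (hpf : ∀ ρ ∈ G, ∀ ρ' ∈ G, ρ <+: ρ' → ρ = ρ')
    (hcov : ∀ τ ∈ LS K, ∃ ρ ∈ G, ρ <+: τ) :
    (LS K).card ≤ ∑ ρ ∈ G, ((LS K).filter (ρ <+: ·)).card := by
  rw [← Finset.card_biUnion (pf_disjoint hpf)]
  apply Finset.card_le_card
  intro τ hτ
  obtain ⟨ρ, hρ, hpre⟩ := hcov τ hτ
  exact Finset.mem_biUnion.mpr ⟨ρ, hρ, Finset.mem_filter.mpr ⟨hτ, hpre⟩⟩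

lemma level_partition (hS : IsTree S) (hLS : ∀ k σ, σ ∈ LS k ↔ σ ∈ S ∧ σ.length = k)
    {m K : ℕ} (hm : m ≤ K) :
    ∑ σ ∈ LS m, ((LS K).filter (σ <+: ·)).card = (LS K).card := by
  have hpf : ∀ ρ ∈ LS m, ∀ ρ' ∈ LS m, ρ <+: ρ' → ρ = ρ' := by
    intro ρ hρ ρ' hρ' hpre
    exact hpre.eq_of_length (((hLS m ρ).mp hρ).2.trans (((hLS m ρ').mp hρ').2.symm))
  rw [← Finset.card_biUnion (pf_disjoint hpf)]
  congr 1
  apply Finset.Subset.antisymm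
  · intro τ hτ
    exact Finset.mem_of_mem_filter τ (Finset.mem_biUnion.mp hτ).choose_spec.2
  · intro τ hτ
    exact Finset.mem_biUnion.mpr ⟨τ.take m, take_mem hS hLS hm hτ,
      Finset.mem_filter.mpr ⟨hτ, List.take_prefix m τ⟩⟩

lemma succs_ncard_eq (hLS : ∀ k σ, σ ∈ LS k ↔ σ ∈ S ∧ σ.length = k)
    {m : ℕ} {σ : List ℕ} (hσ : σ ∈ LS m) :
    (succs S σ).ncard = ((LS (m+1)).filter (σ <+: ·)).card := by
  obtain ⟨hσS, hσl⟩ := (hLS m σ).mp hσ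
  have himg : (↑((LS (m+1)).filter (σ <+: ·)) : Set (List ℕ))
      = (fun a => σ ++ [a]) '' succs S σ := by
    ext τ
    simp only [Finset.coe_filter, Set.mem_setOf_eq, Set.mem_image]
    constructor
    · rintro ⟨hτ, t, ht⟩
      obtain ⟨hτS, hτl⟩ := (hLS _ τ).mp hτ
      have htl : t.length = 1 := by
        have := congrArg List.length ht
        simp [hσl] at this ⊢
        omega
      obtain ⟨a, ha⟩ := List.length_eq_one_iff.mp htl
      subst ha
      exact ⟨a, show σ ++ [a] ∈ S by rw [show σ ++ [a] = τ from ht]; exact hτS, ht⟩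
    · rintro ⟨a, ha, rfl⟩
      exact ⟨(hLS _ _).mpr ⟨ha, by simp [hσl]⟩, ⟨[a], rfl⟩⟩
  have hinj : Function.Injective (fun a : ℕ => σ ++ [a]) := by
    intro a b hab; simpa using hab
  calc (succs S σ).ncard = ((fun a => σ ++ [a]) '' succs S σ).ncard :=
        (Set.ncard_image_of_injective _ hinj).symm
    _ = ((LS (m+1)).filter (σ <+: ·)).card := by rw [← himg, Set.ncard_coe_finset]

lemma desc_card_const (hS : IsTree S) (hSnl : NoLeaves S) (hSub : UnifBranching S)
    (hLS : ∀ k σ, σ ∈ LS k ↔ σ ∈ S ∧ σ.length = k) :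
    ∀ d m : ℕ, ∀ σ ∈ LS m, ∀ τ ∈ LS m,
      ((LS (m+d)).filter (σ <+: ·)).card = ((LS (m+d)).filter (τ <+: ·)).card := by
  intro d
  induction d with
  | zero =>
    intro m σ hσ τ hτ
    have hone : ∀ ρ ∈ LS m, ((LS (m+0)).filter (ρ <+: ·)) = {ρ} := by
      intro ρ hρ
      ext x
      simp only [Finset.mem_filter, Finset.mem_singleton]
      constructor
      · rintro ⟨hx, hpre⟩
        exact (hpre.eq_of_length
          ((((hLS m ρ).mp hρ).2).trans (((hLS _ x).mp hx).2.symm))).symm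
      · rintro rfl; exact ⟨hρ, List.prefix_refl _⟩
    rw [hone σ hσ, hone τ hτ]; simp
  | succ d ih =>
    intro m σ hσ τ hτ
    have hdec : ∀ ρ ∈ LS m, ((LS (m+(d+1))).filter (ρ <+: ·))
        = ((LS (m+1)).filter (ρ <+: ·)).biUnion
            (fun υ => (LS (m+1+d)).filter (υ <+: ·)) := by
      intro ρ hρ
      have hρl : ρ.length = m := ((hLS m ρ).mp hρ).2
      ext x
      constructor
      · intro hx0
        obtain ⟨hx, hpre⟩ := Finset.mem_filter.mp hx0
        have hxl : x.length = m + (d+1) := ((hLS _ x).mp hx).2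
        have h1 : x.take (m+1) ∈ (LS (m+1)).filter (ρ <+: ·) := by
          refine Finset.mem_filter.mpr ⟨take_mem hS hLS (by omega) hx, ?_⟩
          rw [List.prefix_iff_eq_take] at hpre ⊢
          rw [hρl] at hpre ⊢
          rw [List.take_take, min_eq_left (by omega)]
          exact hpre
        refine Finset.mem_biUnion.mpr ⟨x.take (m+1), h1,
          Finset.mem_filter.mpr ⟨?_, List.take_prefix _ _⟩⟩
        have he : m + 1 + d = m + (d+1) := by ring
        rw [he]; exact hx
      · intro hx0
        obtain ⟨υ, hυ, hx1⟩ := Finset.mem_biUnion.mp hx0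
        obtain ⟨hx, hpre⟩ := Finset.mem_filter.mp hx1
        have he : m + 1 + d = m + (d+1) := by ring
        rw [he] at hx
        exact Finset.mem_filter.mpr ⟨hx, (Finset.mem_filter.mp hυ).2.trans hpre⟩
    have hpf1 : ∀ ρ ∈ (LS (m+1)).filter (σ <+: ·), ∀ ρ' ∈ (LS (m+1)).filter (σ <+: ·),
        ρ <+: ρ' → ρ = ρ' := by
      intro ρ hρ ρ' hρ' hpre
      exact hpre.eq_of_length
        ((((hLS _ ρ).mp (Finset.mem_of_mem_filter ρ hρ)).2).trans
          (((hLS _ ρ').mp (Finset.mem_of_mem_filter ρ' hρ')).2.symm))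
    have hpf2 : ∀ ρ ∈ (LS (m+1)).filter (τ <+: ·), ∀ ρ' ∈ (LS (m+1)).filter (τ <+: ·),
        ρ <+: ρ' → ρ = ρ' := by
      intro ρ hρ ρ' hρ' hpre
      exact hpre.eq_of_length
        ((((hLS _ ρ).mp (Finset.mem_of_mem_filter ρ hρ)).2).trans
          (((hLS _ ρ').mp (Finset.mem_of_mem_filter ρ' hρ')).2.symm))
    obtain ⟨υ₀, hυ₀⟩ := level_nonempty hS hSnl hLS (m+1)
    have hsum : ∀ ρ ∈ LS m, ∀ hpf : (∀ x ∈ (LS (m+1)).filter (ρ <+: ·),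
          ∀ x' ∈ (LS (m+1)).filter (ρ <+: ·), x <+: x' → x = x'),
        ((LS (m+(d+1))).filter (ρ <+: ·)).card
          = ((LS (m+1)).filter (ρ <+: ·)).card * ((LS (m+1+d)).filter (υ₀ <+: ·)).card := by
      intro ρ hρ hpf
      rw [hdec ρ hρ, Finset.card_biUnion (fun x hx x' hx' hne =>
        pf_disjoint (LS := LS) (K := m+1+d) (G := (LS (m+1)).filter (ρ <+: ·)) hpf x hx x' hx' hne)]
      rw [Finset.sum_congr rfl (fun υ hυ =>
        ih (m+1) υ (Finset.mem_of_mem_filter υ hυ) υ₀ hυ₀)]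
      rw [Finset.sum_const, smul_eq_mul]
    rw [hsum σ hσ hpf1, hsum τ hτ hpf2]
    congr 1
    rw [← succs_ncard_eq hLS hσ, ← succs_ncard_eq hLS hτ]
    exact hSub m σ ((hLS m σ).mp hσ) τ ((hLS m τ).mp hτ)

lemma level_mul_desc (hS : IsTree S) (hSnl : NoLeaves S) (hSub : UnifBranching S)
    (hLS : ∀ k σ, σ ∈ LS k ↔ σ ∈ S ∧ σ.length = k)
    {m K : ℕ} (hm : m ≤ K) {σ : List ℕ} (hσ : σ ∈ LS m) :
    (LS m).card * ((LS K).filter (σ <+: ·)).card = (LS K).card := by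
  obtain ⟨d, rfl⟩ := Nat.exists_eq_add_of_le hm
  rw [← level_partition hS hLS hm]
  rw [Finset.sum_congr rfl (fun τ hτ => desc_card_const hS hSnl hSub hLS d m τ hτ σ hσ)]
  rw [Finset.sum_const, smul_eq_mul]

end Count

lemma seg_take (f : ℕ → ℕ) {a b : ℕ} (h : a ≤ b) : seg f a = (seg f b).take a := by
  unfold seg
  rw [← List.map_take, List.take_range, min_eq_left h]

/-- Let `T, S` be as before, `r > 0`, `n ∈ ℕ`, and let `F ⊆ S` be a finite
prefix-free set of strings, each of length at least `n`, such that every path of `S` extends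
some element of `F`.  Then there is `k ≥ n` with
`Σ_{ρ ∈ F} |T_{|ρ|}|^{-r} ≥ |S_k| ⬝ |T_k|^{-r}`. -/
theorem cost_of_prefixFree_cover
    (T S : Set (List ℕ))
    (hT : IsTree T) (hTfin : FinBranching T) (hT2 : AtLeastTwo T)
    (hST : S ⊆ T) (hS : IsTree S) (hSnl : NoLeaves S) (hSub : UnifBranching S)
    (r : ℝ) (hr : 0 < r) (n : ℕ) (F : Finset (List ℕ))
    (hFS : ∀ ρ ∈ F, ρ ∈ S)
    (hFpf : ∀ ρ ∈ F, ∀ ρ' ∈ F, ρ <+: ρ' → ρ = ρ')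
    (hFlen : ∀ ρ ∈ F, n ≤ ρ.length)
    (hFcov : ∀ f ∈ paths S, ∃ ρ ∈ F, seg f ρ.length = ρ) :
    ∃ k : ℕ, n ≤ k ∧
      ((level S k).ncard : ℝ) * ((level T k).ncard : ℝ) ^ (-r) ≤
        ∑ ρ ∈ F, ((level T ρ.length).ncard : ℝ) ^ (-r) := by
  have hfinT : ∀ k, (level T k).Finite := level_finite hT hTfin
  have hfinS : ∀ k, (level S k).Finite := fun k =>
    (hfinT k).subset (fun σ hσ => ⟨hST hσ.1, hσ.2⟩)
  set LS : ℕ → Finset (List ℕ) := fun k => (hfinS k).toFinset with hLSdef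
  have hLS : ∀ k σ, σ ∈ LS k ↔ σ ∈ S ∧ σ.length = k := by
    intro k σ
    simp [hLSdef, Set.Finite.mem_toFinset, level]
  have hScard : ∀ k, (level S k).ncard = (LS k).card := fun k =>
    Set.ncard_eq_toFinset_card _ (hfinS k)
  have hSpos : ∀ k, 0 < (LS k).card := fun k => Finset.card_pos.mpr
    ((level_nonempty hS hSnl hLS k).imp (fun σ hσ => hσ))
  set K := F.sup List.length with hKdef
  -- covering of level K by F
  have hcov : ∀ τ ∈ LS K, ∃ ρ ∈ F, ρ <+: τ := by
    intro τ hτ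
    obtain ⟨hτS, hτl⟩ := (hLS K τ).mp hτ
    obtain ⟨f, hfpaths, hfseg⟩ := exists_path_extending hS hSnl hτS
    obtain ⟨ρ, hρF, hρseg⟩ := hFcov f hfpaths
    refine ⟨ρ, hρF, ?_⟩
    have hlenK : ρ.length ≤ K := Finset.le_sup hρF
    have h1 : ρ = τ.take ρ.length := by
      conv_lhs => rw [← hρseg, seg_take f (show ρ.length ≤ τ.length by omega), hfseg]
    exact List.prefix_iff_eq_take.mpr h1
  have hineq1 : (LS K).card ≤ ∑ ρ ∈ F, ((LS K).filter (ρ <+: ·)).card :=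
    cover_le_sum hS hLS hFpf hcov
  have hmemF : ∀ ρ ∈ F, ρ ∈ LS ρ.length := fun ρ hρ => (hLS _ ρ).mpr ⟨hFS ρ hρ, rfl⟩
  have hmul : ∀ ρ ∈ F, ((LS ρ.length).card : ℝ) * (((LS K).filter (ρ <+: ·)).card : ℝ)
      = ((LS K).card : ℝ) := by
    intro ρ hρ
    exact_mod_cast congrArg (Nat.cast (R := ℝ))
      (level_mul_desc hS hSnl hSub hLS (Finset.le_sup hρ) (hmemF ρ hρ))
  -- 1 ≤ ∑ 1 / |S_{|ρ|}|
  have hKpos : (0 : ℝ) < ((LS K).card : ℝ) := by exact_mod_cast hSpos K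
  have hone : (1 : ℝ) ≤ ∑ ρ ∈ F, 1 / ((LS ρ.length).card : ℝ) := by
    have h2 : ((LS K).card : ℝ) ≤ ∑ ρ ∈ F, ((LS K).card : ℝ) * (1 / ((LS ρ.length).card : ℝ)) := by
      have h3 : ((LS K).card : ℝ) ≤ ∑ ρ ∈ F, (((LS K).filter (ρ <+: ·)).card : ℝ) := by
        exact_mod_cast hineq1
      refine h3.trans_eq (Finset.sum_congr rfl ?_)
      intro ρ hρ
      have hρpos : ((LS ρ.length).card : ℝ) ≠ 0 := by
        exact_mod_cast (hSpos ρ.length).ne'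
      field_simp
      linarith [hmul ρ hρ]
    rw [← Finset.mul_sum] at h2
    exact (mul_le_mul_iff_right₀ hKpos).mp (by rw [mul_one]; exact h2)
  have hFne : F.Nonempty := by
    rcases F.eq_empty_or_nonempty with h | h
    · rw [h] at hone; norm_num at hone
    · exact h
  set g : List ℕ → ℝ :=
    fun ρ => ((level S ρ.length).ncard : ℝ) * ((level T ρ.length).ncard : ℝ) ^ (-r) with hg
  obtain ⟨ρ₀, hρ₀F, hmin⟩ := F.exists_min_image g hFne
  refine ⟨ρ₀.length, hFlen ρ₀ hρ₀F, ?_⟩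
  have hspos : ∀ m, (0:ℝ) < ((level S m).ncard : ℝ) := by
    intro m; rw [hScard]; exact_mod_cast hSpos m
  have htnn : ∀ m, (0:ℝ) ≤ ((level T m).ncard : ℝ) ^ (-r) := fun m =>
    Real.rpow_nonneg (by positivity) _
  have hgnn : (0:ℝ) ≤ g ρ₀ := mul_nonneg (hspos _).le (htnn _)
  have hterm : ∀ ρ ∈ F, g ρ₀ * (1 / ((LS ρ.length).card : ℝ))
      ≤ ((level T ρ.length).ncard : ℝ) ^ (-r) := by
    intro ρ hρ
    have hs' : ((LS ρ.length).card : ℝ) = ((level S ρ.length).ncard : ℝ) := by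
      rw [hScard]
    have hsne : ((level S ρ.length).ncard : ℝ) ≠ 0 := (hspos _).ne'
    have heq : g ρ * (1 / ((LS ρ.length).card : ℝ))
        = ((level T ρ.length).ncard : ℝ) ^ (-r) := by
      rw [hs', hg]
      field_simp
    calc g ρ₀ * (1 / ((LS ρ.length).card : ℝ))
        ≤ g ρ * (1 / ((LS ρ.length).card : ℝ)) := by
          apply mul_le_mul_of_nonneg_right (hmin ρ hρ)
          positivity
      _ = _ := heq
  calc ((level S ρ₀.length).ncard : ℝ) * ((level T ρ₀.length).ncard : ℝ) ^ (-r)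
      = g ρ₀ * 1 := (mul_one _).symm
    _ ≤ g ρ₀ * ∑ ρ ∈ F, 1 / ((LS ρ.length).card : ℝ) :=
        mul_le_mul_of_nonneg_left hone hgnn
    _ = ∑ ρ ∈ F, g ρ₀ * (1 / ((LS ρ.length).card : ℝ)) := Finset.mul_sum _ _ _
    _ ≤ ∑ ρ ∈ F, ((level T ρ.length).ncard : ℝ) ^ (-r) := Finset.sum_le_sum hterm


end FractalTree
end

section
/- Let T = {0,1}* be the full binary tree. For a binary string σ let k_σ = min{ i : i = |σ| or σ_i = 1 }, and let S = { σ ∈ T : σ_r = 0 for every r with 2k_σ ≤ r < |σ| }. Then S is a subtree of T without leaves, the path set [S] is countable (hence its Hausdorff dimension in the ultrametric space [T] is 0), and for every n, 2^{n/2} ≤ |S_n| ≤ 2 · 2^{n/2}; consequently liminf_{n→∞} log|S_n|/log|T_n| = limsup_{n→∞} log|S_n|/log|T_n| = 1/2. -/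
open Filter MeasureTheory

namespace FractalTree

/-- The full binary tree `{0,1}*`, realized inside `ℕ*` as the strings with entries `≤ 1`. -/
def binT : Set (List ℕ) := {σ | ∀ x ∈ σ, x ≤ 1}

/-- `kval σ = min { i : i = |σ| ∨ σ_i = 1 }`. -/
noncomputable def kval (σ : List ℕ) : ℕ := sInf {i : ℕ | i = σ.length ∨ σ.getD i 0 = 1}

/-- The counterexample tree: strings `σ` that vanish at every position `r` with
`2 ⬝ kval σ ≤ r < |σ|`. -/
noncomputable def exS : Set (List ℕ) :=
  {σ | σ ∈ binT ∧ ∀ r : ℕ, 2 * kval σ ≤ r → r < σ.length → σ.getD r 0 = 0}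




lemma kval_le (σ : List ℕ) : kval σ ≤ σ.length := Nat.sInf_le (Or.inl rfl)

lemma lt_kval {σ : List ℕ} {i : ℕ} (hi : i < kval σ) : i ≠ σ.length ∧ σ.getD i 0 ≠ 1 := by
  have := Nat.notMem_of_lt_sInf hi
  simp only [Set.mem_setOf_eq, not_or] at this
  exact this

lemma le_kval {σ : List ℕ} {k : ℕ} (h : ∀ i < k, i ≠ σ.length ∧ σ.getD i 0 ≠ 1) : k ≤ kval σ := by
  by_contra hc
  push_neg at hc
  have hm := Nat.sInf_mem (⟨σ.length, Or.inl rfl⟩ : {i : ℕ | i = σ.length ∨ σ.getD i 0 = 1}.Nonempty)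
  obtain ⟨h1, h2⟩ := h _ hc
  rcases hm with h | h
  · exact h1 h
  · exact h2 h

lemma kval_eq {σ : List ℕ} {k : ℕ} (hk : k = σ.length ∨ σ.getD k 0 = 1)
    (h : ∀ i < k, i ≠ σ.length ∧ σ.getD i 0 ≠ 1) : kval σ = k :=
  le_antisymm (Nat.sInf_le hk) (le_kval h)

lemma getD_eq_zero_of_lt_kval {σ : List ℕ} (hσ : σ ∈ binT) {i : ℕ} (hi : i < kval σ) :
    σ.getD i 0 = 0 := by
  obtain ⟨-, h2⟩ := lt_kval hi
  rcases Nat.lt_or_ge i σ.length with h | h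
  · rw [List.getD_eq_getElem _ _ h] at h2 ⊢
    have := hσ _ (σ.getElem_mem h)
    omega
  · exact List.getD_eq_default _ _ h


lemma getD_prefix {τ σ : List ℕ} (h : τ <+: σ) {i : ℕ} (hi : i < τ.length) :
    σ.getD i 0 = τ.getD i 0 := by
  obtain ⟨t, rfl⟩ := h
  exact List.getD_append _ _ _ _ hi

lemma exS_tree_closed {σ : List ℕ} (hσ : σ ∈ exS) {τ : List ℕ} (h : τ <+: σ) : τ ∈ exS := by
  obtain ⟨hb, hz⟩ := hσ
  have hbt : τ ∈ binT := fun x hx => hb x (h.subset hx)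
  refine ⟨hbt, fun r hr hrlen => ?_⟩
  have hlen : τ.length ≤ σ.length := h.length_le
  have hk : min (kval σ) τ.length ≤ kval τ := by
    apply le_kval
    intro i hi
    have hiτ : i < τ.length := lt_of_lt_of_le hi (min_le_right _ _)
    obtain ⟨h1, h2⟩ := lt_kval (lt_of_lt_of_le hi (min_le_left _ _))
    rw [getD_prefix h hiτ] at h2
    exact ⟨Nat.ne_of_lt hiτ, h2⟩
  rw [← getD_prefix h hrlen]
  have : 2 * kval σ ≤ r := by
    rcases min_cases (kval σ) τ.length with ⟨he, _⟩ | ⟨he, hlt⟩ <;> omega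
  exact hz r this (lt_of_lt_of_le hrlen hlen)

lemma exS_append_zero {σ : List ℕ} (hσ : σ ∈ exS) : σ ++ [0] ∈ exS := by
  obtain ⟨hb, hz⟩ := hσ
  have hbt : σ ++ [0] ∈ binT := by
    intro x hx
    rcases List.mem_append.1 hx with h | h
    · exact hb x h
    · simp at h; omega
  have hk : kval σ ≤ kval (σ ++ [0]) := by
    apply le_kval
    intro i hi
    obtain ⟨h1, h2⟩ := lt_kval hi
    have hil : i < σ.length := lt_of_lt_of_le hi (kval_le σ)
    rw [List.getD_append _ _ _ _ hil]
    constructor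
    · simp; omega
    · exact h2
  refine ⟨hbt, fun r hr hrlen => ?_⟩
  simp only [List.length_append, List.length_singleton] at hrlen
  rcases Nat.lt_or_ge r σ.length with h | h
  · rw [List.getD_append _ _ _ _ h]
    exact hz r (le_trans (by omega) hr) h
  · have : r = σ.length := by omega
    subst this
    rw [List.getD_append_right _ _ _ _ h]
    simp


lemma seg_length (f : ℕ → ℕ) (n : ℕ) : (seg f n).length = n := by simp [seg]

lemma seg_getD (f : ℕ → ℕ) {n i : ℕ} (hi : i < n) : (seg f n).getD i 0 = f i := by
  rw [List.getD_eq_getElem _ _ (by simp [seg_length, hi])]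
  simp [seg]

lemma paths_exS_eventually_zero {f : ℕ → ℕ} (hf : f ∈ paths exS) :
    ∃ N : ℕ, ∀ n ≥ N, f n = 0 := by
  by_cases hall : ∀ n, f n = 0
  · exact ⟨0, fun n _ => hall n⟩
  · push_neg at hall
    have hex : ∃ k, f k ≠ 0 := hall
    set k := Nat.find hex with hk
    have hfk : f k ≠ 0 := Nat.find_spec hex
    have hmin : ∀ i < k, f i = 0 := fun i hi => by
      have := Nat.find_min hex hi; simpa using this
    refine ⟨2 * k, fun r hr => ?_⟩
    have hσ := hf (r + 1)
    obtain ⟨hb, hz⟩ := hσ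
    have hfk1 : f k = 1 := by
      have : f k ≤ 1 := by
        have hm : f k ∈ seg f (r + 1) := by
          rw [show f k = (seg f (r+1)).getD k 0 from (seg_getD f (by omega)).symm]
          rw [List.getD_eq_getElem _ _ (by rw [seg_length]; omega)]
          exact List.getElem_mem _
        exact hb _ hm
      omega
    have hkv : kval (seg f (r + 1)) = k := by
      apply kval_eq
      · right; rw [seg_getD f (by omega)]; exact hfk1
      · intro i hi
        rw [seg_length, seg_getD f (by omega)]
        rw [hmin i hi]
        constructor <;> omega
    have := hz r (by rw [hkv]; omega) (by rw [seg_length]; omega)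
    rwa [seg_getD f (by omega)] at this

lemma paths_exS_countable : (paths exS).Countable := by
  have hsub : paths exS ⊆ Set.range (fun l : List ℕ => fun n => l.getD n 0) := by
    intro f hf
    obtain ⟨N, hN⟩ := paths_exS_eventually_zero hf
    refine ⟨seg f N, ?_⟩
    funext n
    rcases Nat.lt_or_ge n N with h | h
    · exact seg_getD f h
    · show (seg f N).getD n 0 = f n
      rw [List.getD_eq_default _ _ (by rw [seg_length]; omega)]
      exact (hN n h).symm
  exact (Set.countable_range _).mono hsub


lemma binT_level_succ (m : ℕ) :
    level binT (m + 1) = ((· ++ [0]) '' level binT m) ∪ ((· ++ [1]) '' level binT m) := by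
  ext σ
  constructor
  · rintro ⟨hb, hlen⟩
    have hne : σ ≠ [] := by intro h; simp [h] at hlen
    have hdl : σ.dropLast ∈ level binT m := by
      refine ⟨fun x hx => hb x ((List.dropLast_sublist σ).mem hx), ?_⟩
      simp [List.length_dropLast, hlen]
    have hlast : σ.getLast hne ≤ 1 := hb _ (List.getLast_mem hne)
    have heq : σ.dropLast ++ [σ.getLast hne] = σ := List.dropLast_append_getLast hne
    interval_cases h : σ.getLast hne
    · left; exact ⟨σ.dropLast, hdl, by simpa [h] using heq⟩
    · right; exact ⟨σ.dropLast, hdl, by simpa [h] using heq⟩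
  · rintro (⟨τ, ⟨hb, hlen⟩, rfl⟩ | ⟨τ, ⟨hb, hlen⟩, rfl⟩) <;>
    · constructor
      · intro x hx
        rcases List.mem_append.1 hx with h | h
        · exact hb x h
        · simp at h; omega
      · simp [hlen]

lemma binT_level_finite_card (m : ℕ) :
    (level binT m).Finite ∧ (level binT m).ncard = 2 ^ m := by
  induction m with
  | zero =>
    have : level binT 0 = {([] : List ℕ)} := by
      ext σ
      simp only [level, binT, Set.mem_setOf_eq, Set.mem_singleton_iff, List.length_eq_zero_iff]
      constructor
      · rintro ⟨-, h⟩; exact h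
      · rintro rfl; simp
    rw [this]
    simp
  | succ m ih =>
    obtain ⟨hfin, hcard⟩ := ih
    have hinj0 : Set.InjOn (· ++ [0]) (level binT m) := fun a _ b _ h =>
      List.append_cancel_right h  -- guess name
    have hinj1 : Set.InjOn (· ++ [1]) (level binT m) := fun a _ b _ h =>
      List.append_cancel_right h
    have hdisj : Disjoint ((· ++ [0]) '' level binT m) ((· ++ [1]) '' level binT m) := by
      rw [Set.disjoint_left]
      rintro σ ⟨a, -, rfl⟩ ⟨b, -, hb⟩
      have := List.append_inj_right' hb.symm rfl -- guess
      simp at this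
    rw [binT_level_succ m]
    constructor
    · exact (hfin.image _).union (hfin.image _)
    · rw [Set.ncard_union_eq hdisj (hfin.image _) (hfin.image _),
        Set.ncard_image_of_injOn hinj0, Set.ncard_image_of_injOn hinj1, hcard]
      ring

lemma replicate_zero_append_mem_exS {K : ℕ} {β : List ℕ} (hβ : β ∈ binT) (hlen : β.length ≤ K) :
    List.replicate K 0 ++ β ∈ exS := by
  set σ := List.replicate K 0 ++ β with hσ
  have hσlen : σ.length = K + β.length := by simp [hσ]
  have hb : σ ∈ binT := by
    intro x hx
    rcases List.mem_append.1 hx with h | h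
    · simp [List.eq_of_mem_replicate h]
    · exact hβ x h
  have hk : K ≤ kval σ := by
    apply le_kval
    intro i hi
    rw [List.getD_append _ _ _ _ (by simp [hi])]
    constructor
    · omega
    · rw [List.getD_eq_getElem _ _ (by simp; omega)]
      simp
  refine ⟨hb, fun r hr hrlen => ?_⟩
  omega

lemma exS_subset_binT : exS ⊆ binT := fun _ h => h.1

lemma level_exS_finite (n : ℕ) : (level exS n).Finite := by
  apply (binT_level_finite_card n).1.subset
  intro σ hσ
  exact ⟨exS_subset_binT hσ.1, hσ.2⟩

lemma lower_bound (n : ℕ) : 2 ^ (n / 2) ≤ (level exS n).ncard := by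
  have h := binT_level_finite_card (n / 2)
  rw [← h.2]
  refine Set.ncard_le_ncard_of_injOn (fun β => List.replicate (n - n / 2) 0 ++ β)
    ?_ ?_ (level_exS_finite n)
  · rintro β ⟨hb, hlen⟩
    refine ⟨replicate_zero_append_mem_exS hb (by omega), by simp [hlen]; omega⟩
  · intro a _ b _ hab
    exact List.append_cancel_left hab

lemma getD_kval_eq_one {σ : List ℕ} (h : kval σ < σ.length) : σ.getD (kval σ) 0 = 1 := by
  have hm := Nat.sInf_mem (⟨σ.length, Or.inl rfl⟩ :
    {i : ℕ | i = σ.length ∨ σ.getD i 0 = 1}.Nonempty)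
  rcases hm with h1 | h1
  · exact absurd h1 (Nat.ne_of_lt h)
  · exact h1

lemma ncard_biUnion_le {α : Type*} (B : ℕ → Set α) (c : ℕ → ℕ)
    (K : ℕ) (h : ∀ k < K, (B k).ncard ≤ c k) :
    (⋃ k ∈ Finset.range K, B k).ncard ≤ ∑ k ∈ Finset.range K, c k := by
  induction K with
  | zero => simp
  | succ K ih =>
    rw [Finset.range_add_one, Finset.set_biUnion_insert, Finset.sum_insert (by simp)]
    calc (B K ∪ ⋃ k ∈ Finset.range K, B k).ncard
        ≤ (B K).ncard + (⋃ k ∈ Finset.range K, B k).ncard := Set.ncard_union_le _ _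
      _ ≤ c K + ∑ k ∈ Finset.range K, c k :=
          Nat.add_le_add (h K (by omega)) (ih (fun k hk => h k (by omega)))

lemma ncard_A_le (n : ℕ) :
    ({σ ∈ level exS n | n - n / 2 ≤ kval σ}).ncard ≤ 2 ^ (n / 2) := by
  set K := n - n / 2 with hK
  have h := binT_level_finite_card (n / 2)
  rw [← h.2]
  refine Set.ncard_le_ncard_of_injOn (fun σ => σ.drop K) ?_ ?_ h.1
  · rintro σ ⟨⟨⟨hb, -⟩, hlen⟩, -⟩
    constructor
    · intro x hx
      exact hb x ((List.drop_sublist K σ).mem hx)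
    · rw [List.length_drop, hlen]; omega
  · rintro σ ⟨⟨⟨hbσ, -⟩, hlenσ⟩, hkσ⟩ τ ⟨⟨⟨hbτ, -⟩, hlenτ⟩, hkτ⟩ hdrop
    apply List.ext_getElem (by omega)
    intro i hi hi'
    rcases Nat.lt_or_ge i K with h | h
    · have h1 : σ.getD i 0 = 0 := getD_eq_zero_of_lt_kval hbσ (by omega)
      have h2 : τ.getD i 0 = 0 := getD_eq_zero_of_lt_kval hbτ (by omega)
      rw [List.getD_eq_getElem _ _ hi] at h1
      rw [List.getD_eq_getElem _ _ hi'] at h2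
      rw [h1, h2]
    · have e1 : σ[i] = (σ.drop K)[i - K]'(by rw [List.length_drop]; omega) := by
        rw [List.getElem_drop]
        congr 1; omega
      have e2 : τ[i] = (τ.drop K)[i - K]'(by rw [List.length_drop]; omega) := by
        rw [List.getElem_drop]
        congr 1; omega
      rw [e1, e2]
      simp only [hdrop]

lemma ncard_B_le (n k : ℕ) (hk : k < n - n / 2) :
    ({σ ∈ level exS n | kval σ = k}).ncard ≤ 2 ^ (k - 1) := by
  have hn : 1 ≤ n := by omega
  have h2k : 2 * k < n := by omega
  rcases Nat.eq_zero_or_pos k with rfl | hkpos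
  · have : {σ ∈ level exS n | kval σ = 0} = ∅ := by
      ext σ
      simp only [Set.mem_setOf_eq, Set.mem_empty_iff_false, iff_false, not_and]
      rintro ⟨⟨hb, hz⟩, hlen⟩ hkv
      have h1 : σ.getD 0 0 = 1 := by
        have := getD_kval_eq_one (σ := σ) (by omega)
        rwa [hkv] at this
      have h0 : σ.getD 0 0 = 0 := hz 0 (by omega) (by omega)
      omega
    rw [this]
    simp
  · have h := binT_level_finite_card (k - 1)
    rw [← h.2]
    refine Set.ncard_le_ncard_of_injOn (fun σ => (σ.drop (k + 1)).take (k - 1)) ?_ ?_ h.1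
    · rintro σ ⟨⟨⟨hb, -⟩, hlen⟩, -⟩
      constructor
      · intro x hx
        exact hb x ((List.drop_sublist (k+1) σ).mem ((List.take_sublist _ _).mem hx))
      · rw [List.length_take, List.length_drop, hlen]; omega
    · rintro σ ⟨⟨⟨hbσ, hzσ⟩, hlenσ⟩, hkσ⟩ τ ⟨⟨⟨hbτ, hzτ⟩, hlenτ⟩, hkτ⟩ hmid
      apply List.ext_getElem (by omega)
      intro i hi hi'
      have key : ∀ (ρ : List ℕ), ρ ∈ binT →
          (∀ r, 2 * kval ρ ≤ r → r < ρ.length → ρ.getD r 0 = 0) →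
          ρ.length = n → kval ρ = k → ∀ (hj : i < ρ.length),
          (i < k → ρ[i] = 0) ∧ (i = k → ρ[i] = 1) ∧ (2 * k ≤ i → ρ[i] = 0) := by
        intro ρ hb hz hlen hkv hj
        refine ⟨fun h => ?_, fun h => ?_, fun h => ?_⟩
        · have := getD_eq_zero_of_lt_kval hb (hkv ▸ h)
          rwa [List.getD_eq_getElem _ _ hj] at this
        · have := getD_kval_eq_one (σ := ρ) (by omega)
          rw [hkv] at this
          subst h
          rwa [List.getD_eq_getElem _ _ hj] at this
        · have := hz i (by omega) (by omega)
          rwa [List.getD_eq_getElem _ _ hj] at this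
      obtain ⟨s1, s2, s3⟩ := key σ hbσ hzσ hlenσ hkσ hi
      obtain ⟨t1, t2, t3⟩ := key τ hbτ hzτ hlenτ hkτ hi'
      rcases Nat.lt_or_ge i k with h | h
      · rw [s1 h, t1 h]
      rcases Nat.eq_or_lt_of_le h with rfl | h'
      · rw [s2 rfl, t2 rfl]
      rcases Nat.lt_or_ge i (2 * k) with h'' | h''
      · -- middle region : k < i < 2k
        have hjlt : i - (k + 1) < k - 1 := by omega
        have e1 : σ[i] = ((σ.drop (k+1)).take (k-1))[i - (k+1)]'(by
            rw [List.length_take, List.length_drop]; omega) := by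
          rw [List.getElem_take, List.getElem_drop]
          congr 1; omega
        have e2 : τ[i] = ((τ.drop (k+1)).take (k-1))[i - (k+1)]'(by
            rw [List.length_take, List.length_drop]; omega) := by
          rw [List.getElem_take, List.getElem_drop]
          congr 1; omega
        rw [e1, e2]
        simp only [hmid]
      · rw [s3 h'', t3 h'']

lemma sum_pow_le (K : ℕ) : ∑ k ∈ Finset.range K, 2 ^ (k - 1) ≤ 2 ^ (K - 1) := by
  induction K with
  | zero => simp
  | succ K ih =>
    rw [Finset.sum_range_succ, Nat.add_sub_cancel]
    rcases Nat.eq_zero_or_pos K with rfl | hK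
    · simp
    · have : 2 ^ (K - 1) + 2 ^ (K - 1) = 2 ^ K := by
        rw [← two_mul, ← pow_succ']
        congr 1; omega
      omega

lemma upper_bound (n : ℕ) : (level exS n).ncard ≤ 2 * 2 ^ (n / 2) := by
  set K := n - n / 2 with hK
  set A := {σ ∈ level exS n | K ≤ kval σ} with hA
  have hsub : level exS n ⊆ A ∪ ⋃ k ∈ Finset.range K, {σ ∈ level exS n | kval σ = k} := by
    intro σ hσ
    rcases Nat.lt_or_ge (kval σ) K with h | h
    · right
      refine Set.mem_biUnion (Finset.mem_range.2 h) ⟨hσ, rfl⟩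
    · left; exact ⟨hσ, h⟩
  have hfinA : A.Finite := (level_exS_finite n).subset (fun σ h => h.1)
  have hfinU : (⋃ k ∈ Finset.range K, {σ ∈ level exS n | kval σ = k}).Finite :=
    Set.Finite.biUnion (Finset.range K).finite_toSet
      (fun k _ => (level_exS_finite n).subset (fun σ h => h.1))
  calc (level exS n).ncard
      ≤ (A ∪ ⋃ k ∈ Finset.range K, {σ ∈ level exS n | kval σ = k}).ncard :=
        Set.ncard_le_ncard hsub (hfinA.union hfinU)
    _ ≤ A.ncard + (⋃ k ∈ Finset.range K, {σ ∈ level exS n | kval σ = k}).ncard :=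
        Set.ncard_union_le _ _
    _ ≤ 2 ^ (n / 2) + ∑ k ∈ Finset.range K, 2 ^ (k - 1) := by
        refine Nat.add_le_add (ncard_A_le n) ?_
        exact ncard_biUnion_le _ _ K (fun k hk => ncard_B_le n k hk)
    _ ≤ 2 ^ (n / 2) + 2 ^ (K - 1) := Nat.add_le_add_left (sum_pow_le K) _
    _ ≤ 2 * 2 ^ (n / 2) := by
        have : 2 ^ (K - 1) ≤ 2 ^ (n / 2) := Nat.pow_le_pow_right (by norm_num) (by omega)
        omega

lemma tendsto_ratio :
    Filter.Tendsto
      (fun n : ℕ => Real.log ((level exS n).ncard) / Real.log ((level binT n).ncard))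
      Filter.atTop (nhds (1 / 2)) := by
  have hlog2 : (0:ℝ) < Real.log 2 := Real.log_pos (by norm_num)
  apply tendsto_of_tendsto_of_tendsto_of_le_of_le'
    (g := fun n : ℕ => 1/2 - 1/(n:ℝ)) (h := fun n : ℕ => 1/2 + 1/(n:ℝ))
  · have := (tendsto_const_nhds (x := (1:ℝ)/2) (f := Filter.atTop (α := ℕ))).sub
      tendsto_one_div_atTop_nhds_zero_nat
    simpa using this
  · have := (tendsto_const_nhds (x := (1:ℝ)/2) (f := Filter.atTop (α := ℕ))).add
      tendsto_one_div_atTop_nhds_zero_nat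
    simpa using this
  · filter_upwards [Filter.eventually_ge_atTop 1] with n hn
    have hT : ((level binT n).ncard : ℝ) = 2 ^ n := by
      rw [(binT_level_finite_card n).2]; push_cast; ring
    rw [hT, Real.log_pow]
    have hnpos : (0:ℝ) < n := by exact_mod_cast hn
    have hden : (0:ℝ) < n * Real.log 2 := by positivity
    rw [le_div_iff₀ hden]
    have hl : (2:ℝ) ^ (n/2 : ℕ) ≤ ((level exS n).ncard : ℝ) := by
      exact_mod_cast lower_bound n
    have hlogS : ((n/2 : ℕ) : ℝ) * Real.log 2 ≤ Real.log ((level exS n).ncard) := by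
      rw [← Real.log_pow]
      apply Real.log_le_log (by positivity) hl
    have hfloor : ((n:ℝ) - 1) / 2 ≤ ((n/2 : ℕ) : ℝ) := by
      have h2 : n ≤ 2 * (n/2) + 1 := by omega
      have h3 := (Nat.cast_le (α := ℝ)).2 h2
      push_cast at h3
      linarith
    have hexp : (1/2 - 1/(n:ℝ)) * ((n:ℝ) * Real.log 2) = ((n:ℝ)/2 - 1) * Real.log 2 := by
      field_simp
    rw [hexp]
    calc ((n:ℝ)/2 - 1) * Real.log 2 ≤ ((n/2 : ℕ) : ℝ) * Real.log 2 :=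
          mul_le_mul_of_nonneg_right (by linarith) hlog2.le
      _ ≤ _ := hlogS
  · filter_upwards [Filter.eventually_ge_atTop 1] with n hn
    have hT : ((level binT n).ncard : ℝ) = 2 ^ n := by
      rw [(binT_level_finite_card n).2]; push_cast; ring
    rw [hT, Real.log_pow]
    have hnpos : (0:ℝ) < n := by exact_mod_cast hn
    have hden : (0:ℝ) < n * Real.log 2 := by positivity
    rw [div_le_iff₀ hden]
    have hu : ((level exS n).ncard : ℝ) ≤ 2 * 2 ^ (n/2 : ℕ) := by
      exact_mod_cast upper_bound n
    have hSpos : (0:ℝ) < ((level exS n).ncard : ℝ) := by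
      have := lower_bound n
      have : 1 ≤ (level exS n).ncard := le_trans (Nat.one_le_two_pow) this
      exact_mod_cast this
    have hlogS : Real.log ((level exS n).ncard) ≤ (((n/2 : ℕ) : ℝ) + 1) * Real.log 2 := by
      have : Real.log ((level exS n).ncard) ≤ Real.log (2 * 2 ^ (n/2 : ℕ)) :=
        Real.log_le_log hSpos hu
      rw [Real.log_mul (by norm_num) (by positivity), Real.log_pow] at this
      linarith
    have hceil : ((n/2 : ℕ) : ℝ) ≤ (n:ℝ) / 2 := by
      have h2 : 2 * (n/2) ≤ n := by omega
      have h3 := (Nat.cast_le (α := ℝ)).2 h2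
      push_cast at h3
      linarith
    have hexp : (1/2 + 1/(n:ℝ)) * ((n:ℝ) * Real.log 2) = ((n:ℝ)/2 + 1) * Real.log 2 := by
      field_simp
    rw [hexp]
    calc Real.log ((level exS n).ncard) ≤ (((n/2 : ℕ) : ℝ) + 1) * Real.log 2 := hlogS
      _ ≤ ((n:ℝ)/2 + 1) * Real.log 2 := mul_le_mul_of_nonneg_right (by linarith) hlog2.le


/-- `exS` is a subtree of the full binary tree without leaves, its path set
is countable (hence of Hausdorff dimension `0`), its levels satisfy
`2^{n/2} ≤ |exS_n| ≤ 2 ⬝ 2^{n/2}`, and consequently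
`liminf_n log|S_n|/log|T_n| = limsup_n log|S_n|/log|T_n| = 1/2`. -/
theorem countable_positive_boxDim
    {X : Type*} [MetricSpace X] (φ : (ℕ → ℕ) → X)
    (hφ : ∀ f ∈ paths binT, ∀ g ∈ paths binT, dist (φ f) (φ g) = treeDist binT f g) :
    exS ⊆ binT ∧ IsTree exS ∧ NoLeaves exS ∧
    (paths exS).Countable ∧
    dimH (φ '' paths exS) = 0 ∧
    (∀ n : ℕ, 2 ^ (n / 2) ≤ (level exS n).ncard ∧ (level exS n).ncard ≤ 2 * 2 ^ (n / 2)) ∧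
    Filter.liminf
      (fun n : ℕ => Real.log ((level exS n).ncard) / Real.log ((level binT n).ncard))
      Filter.atTop = 1 / 2 ∧
    Filter.limsup
      (fun n : ℕ => Real.log ((level exS n).ncard) / Real.log ((level binT n).ncard))
      Filter.atTop = 1 / 2 := by
  refine ⟨exS_subset_binT,
    ⟨⟨[], ⟨fun x hx => by simp at hx, fun r _ hr => by simp at hr⟩⟩,
      fun σ hσ τ hτ => exS_tree_closed hσ hτ⟩,
    fun σ hσ => ⟨0, exS_append_zero hσ⟩,
    paths_exS_countable,
    (paths_exS_countable.image φ).dimH_zero,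
    fun n => ⟨lower_bound n, upper_bound n⟩,
    tendsto_ratio.liminf_eq, tendsto_ratio.limsup_eq⟩

end FractalTree
end
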